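/- Let α be a non-quadratic irrational real number, let β = (2·α + 1)/(α + 1), and let n be a natural number with n ≥ 2. Then there do NOT exist integers i, j, k, l with |i·l − j·k| = 1 and (i·(α/n) + j)/(k·(α/n) + l) = β/n; that is, α/n and β/n are not PGL₂(ℤ)-equivalent (although α and β themselves are PGL₂(ℤ)-equivalent). -/

import Mathlib

lemma lin_indep_int (α : ℝ) (h : LinearIndependent ℚ ![(1 : ℝ), α, α ^ 2])
    (a b c : ℤ) (heq : (a : ℝ) + (b : ℝ) * α + (c : ℝ) * α ^ 2 = 0) :
    a = 0 ∧ b = 0 ∧ c = 0 := by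
  rw [Fintype.linearIndependent_iff] at h
  have := h ![(a : ℚ), (b : ℚ), (c : ℚ)] (by
    simp only [Fin.sum_univ_three, Matrix.cons_val_zero, Matrix.cons_val_one,
      Matrix.head_cons, Matrix.cons_val_two, Matrix.tail_cons, Rat.smul_def]
    push_cast
    linarith)
  refine ⟨?_, ?_, ?_⟩
  · have := this 0; simp at this; exact_mod_cast this
  · have := this 1; simp at this; exact_mod_cast this
  · have := this 2; simp at this; exact_mod_cast this

/-- Two irrational reals are `PGL₂(ℤ)`-equivalent when related by an integral
fractional linear transformation of determinant `±1`. -/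
def PGL2ZEquiv (x y : ℝ) : Prop :=
  ∃ i j k l : ℤ, |i * l - j * k| = 1 ∧
    ((i : ℝ) * x + (j : ℝ)) / ((k : ℝ) * x + (l : ℝ)) = y

/-- For `α` a non-quadratic irrational and `β = (2α+1)/(α+1)`: although `α` and `β`
are `PGL₂(ℤ)`-equivalent, for every `n ≥ 2` the numbers `α/n` and `β/n` are not
`PGL₂(ℤ)`-equivalent. -/
theorem stmt_10 (α β : ℝ) (hα : Irrational α)
    (hnq : LinearIndependent ℚ ![(1 : ℝ), α, α ^ 2])
    (hβ : β = (2 * α + 1) / (α + 1))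
    (n : ℕ) (hn : 2 ≤ n) :
    PGL2ZEquiv α β ∧ ¬ PGL2ZEquiv (α / (n : ℝ)) (β / (n : ℝ)) := by
  have hα1 : α + 1 ≠ 0 := by
    intro h
    exact hα ⟨-1, by push_cast; linarith⟩
  have hnR : (n : ℝ) ≠ 0 := by positivity
  constructor
  · refine ⟨2, 1, 1, 1, by norm_num, ?_⟩
    rw [hβ]; push_cast; ring_nf
  · rintro ⟨i, j, k, l, hdet, heq⟩
    by_cases hd : (k : ℝ) * (α / n) + l = 0
    · rw [hd, div_zero] at heq
      have hβ0 : β = 0 := by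
        have := heq.symm
        rwa [div_eq_zero_iff, or_iff_left hnR] at this
      rw [hβ, div_eq_zero_iff, or_iff_left hα1] at hβ0
      exact hα ⟨-1/2, by push_cast; linarith⟩
    · rw [hβ, div_eq_iff hd] at heq
      have h2 : (((i : ℝ) * α + (j : ℝ) * n) * (α + 1) * n) * (n : ℝ) =
          ((2 * α + 1) * ((k : ℝ) * α + (l : ℝ) * n)) * (n : ℝ) := by
        have h3 := heq
        field_simp at h3
        linear_combination (n : ℝ) * h3
      have h2' := mul_right_cancel₀ hnR h2
      have key : ((n ^ 2 * j - n * l : ℤ) : ℝ) + ((n * i + n ^ 2 * j - k - 2 * n * l : ℤ) : ℝ) * α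
          + ((n * i - 2 * k : ℤ) : ℝ) * α ^ 2 = 0 := by
        push_cast
        linear_combination h2'
      obtain ⟨hA, hB, hC⟩ := lin_indep_int α hnq _ _ _ key
      have hnZ : (n : ℤ) ≠ 0 := by exact_mod_cast (by omega : n ≠ 0)
      have hl : l = n * j := by
        have h4 : (n : ℤ) * (n * j - l) = 0 := by linarith [hA, (by ring : (n:ℤ) * (n * j - l) = n^2*j - n*l)]
        have := (mul_eq_zero.mp h4).resolve_left hnZ
        linarith
      have hi : i = 2 * n * j := by
        have h1 : (n : ℤ) * i = 2 * k := by linarith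
        have h5 : (n : ℤ) * (i - 2 * n * j) = 0 := by
          nlinarith [hB, h1, hl]
        have := (mul_eq_zero.mp h5).resolve_left hnZ
        linarith
      have hk : k = n ^ 2 * j := by nlinarith [hC, hi]
      have hdet' : i * l - j * k = (n : ℤ) ^ 2 * j ^ 2 := by
        rw [hi, hl, hk]; ring
      rw [hdet'] at hdet
      have hn2 : (2 : ℤ) ≤ n := by exact_mod_cast hn
      rcases eq_or_ne j 0 with hj | hj
      · simp [hj] at hdet
      · have hj1 : 1 ≤ j ^ 2 := by
          have := Int.one_le_abs hj
          nlinarith [sq_abs j]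
        have h6 : (4 : ℤ) ≤ (n : ℤ) ^ 2 * j ^ 2 := by nlinarith
        rw [abs_of_nonneg (by positivity)] at hdet
        omega
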